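/- arXiv:2601.18173 — 4 statements merged into one kernel-verified Lean document; each statement's English description precedes it below -/
import Mathlib

section
/- Let π ∈ S_n, 2 ≤ i ≤ n−1, with a = π(i−1), b = π(i), c = π(i+1). The number of vertices of degree 4 in column i of the grid graph G_π equals max{0, min(a, c, b−1) − 1}. -/
/-- `π` is a permutation of `{1,…,n}` (viewed as a function `ℕ → ℕ`). -/
def IsPermOn (n : ℕ) (π : ℕ → ℕ) : Prop :=
  Set.BijOn π (Set.Icc 1 n) (Set.Icc 1 n)

/-- `(i,j)` is a vertex of the grid graph of `π`. -/
def inGrid (n : ℕ) (π : ℕ → ℕ) (v : ℕ × ℕ) : Prop :=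
  1 ≤ v.1 ∧ v.1 ≤ n ∧ 1 ≤ v.2 ∧ v.2 ≤ π v.1

/-- Adjacency in the grid graph `G_π`. -/
def gridAdj (n : ℕ) (π : ℕ → ℕ) (v w : ℕ × ℕ) : Prop :=
  inGrid n π v ∧ inGrid n π w ∧
    ((v.1 = w.1 ∧ (v.2 + 1 = w.2 ∨ w.2 + 1 = v.2)) ∨
     (v.2 = w.2 ∧ (v.1 + 1 = w.1 ∨ w.1 + 1 = v.1)))

/-- The grid graph `G_π` as a simple graph on `ℕ × ℕ`. -/
def gridGraph (n : ℕ) (π : ℕ → ℕ) : SimpleGraph (ℕ × ℕ) where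
  Adj := gridAdj n π
  symm := by
    constructor
    intro v w h
    unfold gridAdj at *
    tauto
  loopless := by
    constructor
    intro v h
    unfold gridAdj inGrid at h
    omega

/-- Degree of a vertex in the grid graph. -/
noncomputable def gridDeg (n : ℕ) (π : ℕ → ℕ) (v : ℕ × ℕ) : ℕ :=
  Nat.card {w : ℕ × ℕ // gridAdj n π v w}

/-- The vertex set of the grid graph, as a finset. -/
def vertFinset (n : ℕ) (π : ℕ → ℕ) : Finset (ℕ × ℕ) :=
  (Finset.Icc 1 n ×ˢ Finset.Icc 1 n).filter (fun v => v.2 ≤ π v.1)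

/-- Lower endpoints of vertical edges of the grid graph. -/
def vertEdgeFinset (n : ℕ) (π : ℕ → ℕ) : Finset (ℕ × ℕ) :=
  (Finset.Icc 1 n ×ˢ Finset.Icc 1 n).filter (fun v => v.2 + 1 ≤ π v.1)

/-- The horizontal-edge statistic `H(π) = Σ_{t=1}^{n-1} min(π t, π (t+1))`. -/
def Hstat (n : ℕ) (π : ℕ → ℕ) : ℕ :=
  ∑ t ∈ Finset.Icc 1 (n - 1), min (π t) (π (t + 1))

open Classical in
lemma gridDeg_internal (n : ℕ) (π : ℕ → ℕ) (i s : ℕ)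
    (hi2 : 2 ≤ i) (hin : i + 1 ≤ n) (hs1 : 1 ≤ s) (hs : s ≤ π i) :
    gridDeg n π (i, s) =
      (if s + 1 ≤ π i then 1 else 0) + (if 2 ≤ s then 1 else 0) +
      (if s ≤ π (i - 1) then 1 else 0) + (if s ≤ π (i + 1) then 1 else 0) := by
  classical
  have hU : {w | gridAdj n π (i, s) w} =
      ↑(({(i, s + 1), (i, s - 1), (i - 1, s), (i + 1, s)} : Finset (ℕ × ℕ)).filter
        (fun w => gridAdj n π (i, s) w)) := by
    ext ⟨x, y⟩
    simp only [Set.mem_setOf_eq, Finset.coe_filter, Finset.mem_insert,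
      Finset.mem_singleton, Prod.mk.injEq]
    constructor
    · intro h
      refine ⟨?_, h⟩
      have h' := h
      simp only [gridAdj, inGrid] at h'
      obtain ⟨-, -, hcase⟩ := h'
      rcases hcase with ⟨h1, h2⟩ | ⟨h1, h2⟩ <;> omega
    · exact fun h => h.2
  have h1 : gridDeg n π (i, s) =
      (({(i, s + 1), (i, s - 1), (i - 1, s), (i + 1, s)} : Finset (ℕ × ℕ)).filter
        (fun w => gridAdj n π (i, s) w)).card := by
    rw [gridDeg, ← Set.ncard_coe_finset, ← hU, ← Nat.card_coe_set_eq]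
    rfl
  rw [h1, Finset.card_filter]
  have hne1 : (i, s + 1) ∉ ({(i, s - 1), (i - 1, s), (i + 1, s)} : Finset (ℕ × ℕ)) := by
    simp [Prod.ext_iff]; omega
  have hne2 : (i, s - 1) ∉ ({(i - 1, s), (i + 1, s)} : Finset (ℕ × ℕ)) := by
    simp [Prod.ext_iff]; omega
  have hne3 : (i - 1, s) ∉ ({(i + 1, s)} : Finset (ℕ × ℕ)) := by
    simp only [Finset.mem_singleton, Prod.ext_iff, not_and]
    omega
  rw [show ({(i, s + 1), (i, s - 1), (i - 1, s), (i + 1, s)} : Finset (ℕ × ℕ)) =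
    insert (i, s+1) (insert (i, s-1) (insert (i-1, s) {(i+1, s)})) from rfl]
  rw [Finset.sum_insert hne1, Finset.sum_insert hne2, Finset.sum_insert hne3,
    Finset.sum_singleton]
  have e1 : gridAdj n π (i, s) (i, s + 1) ↔ s + 1 ≤ π i := by
    simp [gridAdj, inGrid]; omega
  have e2 : gridAdj n π (i, s) (i, s - 1) ↔ 2 ≤ s := by
    simp [gridAdj, inGrid]; omega
  have e3 : gridAdj n π (i, s) (i - 1, s) ↔ s ≤ π (i - 1) := by
    simp [gridAdj, inGrid]; omega
  have e4 : gridAdj n π (i, s) (i + 1, s) ↔ s ≤ π (i + 1) := by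
    simp [gridAdj, inGrid]; omega
  simp only [e1, e2, e3, e4]
  ring

/-- The number of degree-4 vertices in an internal column `i` equals
`max{0, min(a, c, b-1) - 1}` where `a = π(i-1)`, `b = π(i)`, `c = π(i+1)`
(the `max{0,·}` is realized by truncated subtraction on `ℕ`). -/
theorem grid_deg4_in_column (n : ℕ) (π : ℕ → ℕ) (hπ : IsPermOn n π)
    (i : ℕ) (hi2 : 2 ≤ i) (hin : i + 1 ≤ n) :
    ((Finset.Icc 1 (π i)).filter (fun s => gridDeg n π (i, s) = 4)).card =
      min (π (i - 1)) (min (π (i + 1)) (π i - 1)) - 1 := by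
  classical
  have hfil : (Finset.Icc 1 (π i)).filter (fun s => gridDeg n π (i, s) = 4) =
      Finset.Icc 2 (min (π (i - 1)) (min (π (i + 1)) (π i - 1))) := by
    ext s
    simp only [Finset.mem_filter, Finset.mem_Icc, le_min_iff]
    constructor
    · rintro ⟨⟨hs1, hs2⟩, hdeg⟩
      rw [gridDeg_internal n π i s hi2 hin hs1 hs2] at hdeg
      split_ifs at hdeg <;> omega
    · rintro ⟨hs1, hs2, hs3, hs4⟩
      have hb : s ≤ π i := by omega
      refine ⟨⟨by omega, hb⟩, ?_⟩
      rw [gridDeg_internal n π i s hi2 hin (by omega) hb]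
      split_ifs <;> omega
  rw [hfil, Nat.card_Icc]
  omega
end

section
/- For π ∈ S_n with n ≥ 2, the number of degree-1 vertices of G_π lying in the first column equals 𝟙{π(1)=1} + 𝟙{π(1)>π(2)}, and the number in the last column equals 𝟙{π(n)=1} + 𝟙{π(n−1)<π(n)}. -/
lemma aux_ncard3 (a b c : ℕ × ℕ) (hab : a ≠ b) (hac : a ≠ c) (hbc : b ≠ c) :
    ({a, b, c} : Set (ℕ × ℕ)).ncard = 3 := by
  rw [Set.ncard_insert_of_notMem (by simp [hab, hac]) (Set.toFinite _), Set.ncard_pair hbc]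

lemma aux_deg_eq (n : ℕ) (π : ℕ → ℕ) (v : ℕ × ℕ) (S : Set (ℕ × ℕ))
    (h : {w : ℕ × ℕ | gridAdj n π v w} = S) : gridDeg n π v = S.ncard := by
  unfold gridDeg
  rw [Set.ncard, ← h]
  rfl

lemma adj_first (n : ℕ) (π : ℕ → ℕ) (s : ℕ) (hn : 2 ≤ n) (hs1 : 1 ≤ s) (hs2 : s ≤ π 1)
    (h2 : 1 ≤ π 2) (w : ℕ × ℕ) :
    gridAdj n π (1, s) w ↔
      (2 ≤ s ∧ w = (1, s - 1)) ∨ (s + 1 ≤ π 1 ∧ w = (1, s + 1)) ∨ (s ≤ π 2 ∧ w = (2, s)) := by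
  obtain ⟨a, b⟩ := w
  simp only [gridAdj, inGrid, Prod.mk.injEq]
  constructor
  · rintro ⟨hv, ⟨ha1, ha2, hb1, hb2⟩, (⟨h1a, hor⟩ | ⟨hbs, hor⟩)⟩
    · subst h1a
      omega
    · rcases hor with h | h
      · have : a = 2 := by omega
        subst this
        omega
      · omega
  · rintro (⟨hc, ha, hb⟩ | ⟨hc, ha, hb⟩ | ⟨hc, ha, hb⟩) <;> subst ha <;> subst hb <;> omega

lemma adj_last (n : ℕ) (π : ℕ → ℕ) (s : ℕ) (hn : 2 ≤ n) (hs1 : 1 ≤ s) (hs2 : s ≤ π n)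
    (h2 : 1 ≤ π (n - 1)) (w : ℕ × ℕ) :
    gridAdj n π (n, s) w ↔
      (2 ≤ s ∧ w = (n, s - 1)) ∨ (s + 1 ≤ π n ∧ w = (n, s + 1)) ∨
        (s ≤ π (n - 1) ∧ w = (n - 1, s)) := by
  obtain ⟨a, b⟩ := w
  simp only [gridAdj, inGrid, Prod.mk.injEq]
  constructor
  · rintro ⟨hv, ⟨ha1, ha2, hb1, hb2⟩, (⟨h1a, hor⟩ | ⟨hbs, hor⟩)⟩
    · subst h1a
      omega
    · rcases hor with h | h
      · omega
      · have : a = n - 1 := by omega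
        subst this
        omega
  · rintro (⟨hc, ha, hb⟩ | ⟨hc, ha, hb⟩ | ⟨hc, ha, hb⟩) <;> subst ha <;> subst hb <;> omega


lemma deg_gen (n : ℕ) (π : ℕ → ℕ) (v p q r : ℕ × ℕ) (P Q R : Prop)
    [Decidable P] [Decidable Q] [Decidable R]
    (hadj : ∀ w : ℕ × ℕ, gridAdj n π v w ↔ (P ∧ w = p) ∨ (Q ∧ w = q) ∨ (R ∧ w = r))
    (hpq : p ≠ q) (hpr : p ≠ r) (hqr : q ≠ r) :
    gridDeg n π v = (if P then 1 else 0) + (if Q then 1 else 0) + (if R then 1 else 0) := by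
  by_cases hP : P <;> by_cases hQ : Q <;> by_cases hR : R <;>
    simp only [hP, hQ, hR, if_true, if_false, if_pos, if_neg, not_false_iff, add_zero, zero_add]
  · rw [aux_deg_eq n π v {p, q, r} (by ext w; rw [Set.mem_setOf_eq, hadj]; simp [hP, hQ, hR])]
    exact aux_ncard3 p q r hpq hpr hqr
  · rw [aux_deg_eq n π v {p, q} (by ext w; rw [Set.mem_setOf_eq, hadj]; simp [hP, hQ, hR])]
    exact Set.ncard_pair hpq
  · rw [aux_deg_eq n π v {p, r} (by ext w; rw [Set.mem_setOf_eq, hadj]; simp [hP, hQ, hR])]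
    exact Set.ncard_pair hpr
  · rw [aux_deg_eq n π v {p} (by ext w; rw [Set.mem_setOf_eq, hadj]; simp [hP, hQ, hR])]
    exact Set.ncard_singleton p
  · rw [aux_deg_eq n π v {q, r} (by ext w; rw [Set.mem_setOf_eq, hadj]; simp [hP, hQ, hR])]
    exact Set.ncard_pair hqr
  · rw [aux_deg_eq n π v {q} (by ext w; rw [Set.mem_setOf_eq, hadj]; simp [hP, hQ, hR])]
    exact Set.ncard_singleton q
  · rw [aux_deg_eq n π v {r} (by ext w; rw [Set.mem_setOf_eq, hadj]; simp [hP, hQ, hR])]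
    exact Set.ncard_singleton r
  · rw [aux_deg_eq n π v ∅ (by ext w; rw [Set.mem_setOf_eq, hadj]; simp [hP, hQ, hR])]
    exact Set.ncard_empty _

lemma deg_first (n : ℕ) (π : ℕ → ℕ) (s : ℕ) (hn : 2 ≤ n) (hs1 : 1 ≤ s) (hs2 : s ≤ π 1)
    (h2 : 1 ≤ π 2) :
    gridDeg n π (1, s) = (if 2 ≤ s then 1 else 0) + (if s + 1 ≤ π 1 then 1 else 0) +
      (if s ≤ π 2 then 1 else 0) := by
  exact deg_gen n π (1, s) (1, s - 1) (1, s + 1) (2, s) _ _ _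
    (adj_first n π s hn hs1 hs2 h2)
    (by simp [Prod.ext_iff]) (by simp [Prod.ext_iff]) (by simp [Prod.ext_iff])

lemma deg_last (n : ℕ) (π : ℕ → ℕ) (s : ℕ) (hn : 2 ≤ n) (hs1 : 1 ≤ s) (hs2 : s ≤ π n)
    (h2 : 1 ≤ π (n - 1)) :
    gridDeg n π (n, s) = (if 2 ≤ s then 1 else 0) + (if s + 1 ≤ π n then 1 else 0) +
      (if s ≤ π (n - 1) then 1 else 0) := by
  exact deg_gen n π (n, s) (n, s - 1) (n, s + 1) (n - 1, s) _ _ _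
    (adj_last n π s hn hs1 hs2 h2)
    (by simp [Prod.ext_iff]) (by simp [Prod.ext_iff]; omega) (by simp [Prod.ext_iff])

/-- Generic counting for an exterior column with top at `a = π c` and neighbor column value `b`. -/
lemma count_column (n : ℕ) (π : ℕ → ℕ) (c : ℕ) (b : ℕ)
    (ha1 : 1 ≤ π c) (hb1 : 1 ≤ b)
    (hdeg : ∀ s, 1 ≤ s → s ≤ π c →
      gridDeg n π (c, s) = (if 2 ≤ s then 1 else 0) + (if s + 1 ≤ π c then 1 else 0) +
        (if s ≤ b then 1 else 0)) :
    ((Finset.Icc 1 (π c)).filter (fun s => gridDeg n π (c, s) = 1)).card =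
      (if π c = 1 then 1 else 0) + (if b < π c then 1 else 0) := by
  have hcong : ((Finset.Icc 1 (π c)).filter (fun s => gridDeg n π (c, s) = 1)) =
      ((Finset.Icc 1 (π c)).filter (fun s => (π c = 1 ∧ s = 1) ∨ (b < π c ∧ s = π c))) := by
    apply Finset.filter_congr
    intro s hs
    simp only [Finset.mem_Icc] at hs
    rw [hdeg s hs.1 hs.2]
    constructor
    · intro h
      split_ifs at h <;> omega
    · intro h
      split_ifs <;> omega
  rw [hcong]
  by_cases h1 : π c = 1
  · have : ((Finset.Icc 1 (π c)).filter (fun s => (π c = 1 ∧ s = 1) ∨ (b < π c ∧ s = π c)))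
        = {1} := by
      ext x
      simp only [Finset.mem_filter, Finset.mem_Icc, Finset.mem_singleton]
      omega
    rw [this, if_pos h1, if_neg (by omega), Finset.card_singleton]
  · by_cases h2 : b < π c
    · have : ((Finset.Icc 1 (π c)).filter (fun s => (π c = 1 ∧ s = 1) ∨ (b < π c ∧ s = π c)))
          = {π c} := by
        ext x
        simp only [Finset.mem_filter, Finset.mem_Icc, Finset.mem_singleton]
        omega
      rw [this, if_neg h1, if_pos h2, Finset.card_singleton]
    · have : ((Finset.Icc 1 (π c)).filter (fun s => (π c = 1 ∧ s = 1) ∨ (b < π c ∧ s = π c)))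
          = ∅ := by
        ext x
        simp only [Finset.mem_filter, Finset.mem_Icc, Finset.notMem_empty, iff_false]
        omega
      rw [this, if_neg h1, if_neg h2]
      rfl

/-- Count of degree-1 vertices in the first and last columns of `G_π`. -/
theorem grid_deg1_external_columns (n : ℕ) (π : ℕ → ℕ) (hn : 2 ≤ n) (hπ : IsPermOn n π) :
    ((Finset.Icc 1 (π 1)).filter (fun s => gridDeg n π (1, s) = 1)).card =
      (if π 1 = 1 then 1 else 0) + (if π 2 < π 1 then 1 else 0) ∧
    ((Finset.Icc 1 (π n)).filter (fun s => gridDeg n π (n, s) = 1)).card =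
      (if π n = 1 then 1 else 0) + (if π (n - 1) < π n then 1 else 0) := by
  have hmap := hπ.mapsTo
  have h1 : π 1 ∈ Set.Icc 1 n := hmap (by simp [Set.mem_Icc]; omega)
  have h2 : π 2 ∈ Set.Icc 1 n := hmap (by simp [Set.mem_Icc]; omega)
  have hnn : π n ∈ Set.Icc 1 n := hmap (by simp [Set.mem_Icc]; omega)
  have hn1 : π (n - 1) ∈ Set.Icc 1 n := hmap (by simp [Set.mem_Icc]; omega)
  simp only [Set.mem_Icc] at h1 h2 hnn hn1
  constructor
  · exact count_column n π 1 (π 2) h1.1 h2.1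
      (fun s hs1 hs2 => deg_first n π s hn hs1 hs2 h2.1)
  · exact count_column n π n (π (n - 1)) hnn.1 hn1.1
      (fun s hs1 hs2 => deg_last n π s hn hs1 hs2 hn1.1)
end

section
/- The number of 213-avoiding permutations of [n] equals the nth Catalan number C_n = (1/(n+1))·binomial(2n, n). -/
/-- `σ` contains the pattern 213. -/
def Contains213 {n : ℕ} (σ : Equiv.Perm (Fin n)) : Prop :=
  ∃ p q r : Fin n, p < q ∧ q < r ∧ σ q < σ p ∧ σ p < σ r

/-- `σ` contains the pattern 312. -/
def Contains312 {n : ℕ} (σ : Equiv.Perm (Fin n)) : Prop :=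
  ∃ p q r : Fin n, p < q ∧ q < r ∧ σ q < σ r ∧ σ r < σ p

open Classical in
/-- The finset of 213-avoiding permutations of `[n]`. -/
noncomputable def Av213 (n : ℕ) : Finset (Equiv.Perm (Fin n)) :=
  Finset.univ.filter (fun σ => ¬ Contains213 σ)

/-- The 1-based column-height function of `σ`: position `t ∈ {1,…,n}` has
height `σ(t) ∈ {1,…,n}`. -/
def colH (n : ℕ) (σ : Equiv.Perm (Fin n)) (t : ℕ) : ℕ :=
  if h : 1 ≤ t ∧ t ≤ n then (σ ⟨t - 1, by omega⟩ : ℕ) + 1 else 0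

/-! ### A list model of 213-avoiding permutations -/

/-- A list of naturals contains the pattern 213 (as a subsequence `[x, y, z]`
with `y < x < z`). -/
def CL (l : List ℕ) : Prop := ∃ x y z : ℕ, y < x ∧ x < z ∧ [x, y, z].Sublist l

open Classical in
/-- 213-avoiding permutations of `{0, …, n-1}` as lists. -/
noncomputable def avL (n : ℕ) : Finset (List ℕ) :=
  ((List.range n).permutations.toFinset).filter (fun l => ¬ CL l)

lemma mem_avL {n : ℕ} {l : List ℕ} : l ∈ avL n ↔ l.Perm (List.range n) ∧ ¬ CL l := by
  simp [avL, List.mem_permutations]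

lemma CL_of_sublist {l₁ l₂ : List ℕ} (h : l₁.Sublist l₂) (hc : CL l₁) : CL l₂ := by
  obtain ⟨x, y, z, h1, h2, hs⟩ := hc
  exact ⟨x, y, z, h1, h2, hs.trans h⟩

lemma CL_map_add (c : ℕ) (l : List ℕ) : CL (l.map (· + c)) ↔ CL l := by
  constructor
  · rintro ⟨x, y, z, h1, h2, hs⟩
    rw [List.sublist_map_iff] at hs
    obtain ⟨l', hl', he⟩ := hs
    match l', he with
    | [a, b, d], he =>
      simp only [List.map_cons, List.map_nil, List.cons.injEq, and_true] at he
      obtain ⟨hx, hy, hz⟩ := he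
      exact ⟨a, b, d, by omega, by omega, hl'⟩
  · rintro ⟨x, y, z, h1, h2, hs⟩
    exact ⟨x + c, y + c, z + c, by omega, by omega, by simpa using hs.map (· + c)⟩

lemma not_CL_glue {P Q : List ℕ} (hP : ¬ CL P) (hQ : ¬ CL Q)
    (hgt : ∀ a ∈ P, ∀ b ∈ Q, b < a) (hpos : ∀ a ∈ P, 0 < a) :
    ¬ CL (P ++ 0 :: Q) := by
  rintro ⟨x, y, z, hyx, hxz, hs⟩
  rw [List.sublist_append_iff] at hs
  obtain ⟨u, v, huv, hu, hv⟩ := hs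
  match u, v, huv with
  | [], v, huv =>
    subst huv
    rcases List.sublist_cons_iff.mp hv with h | ⟨r, hr, _⟩
    · exact hQ ⟨x, y, z, hyx, hxz, h⟩
    · simp only [List.cons.injEq] at hr
      omega
  | [a], v, huv =>
    have hx : a = x ∧ v = [y, z] := by simpa using huv.symm
    obtain ⟨rfl, rfl⟩ := hx
    have hxP : a ∈ P := hu.subset (by simp)
    have hz : z ∈ 0 :: Q := hv.subset (by simp)
    rcases List.mem_cons.mp hz with rfl | hz
    · omega
    · exact absurd (hgt a hxP z hz) (by omega)
  | [a, b], v, huv =>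
    have : a = x ∧ b = y ∧ v = [z] := by
      simpa using huv.symm
    obtain ⟨rfl, rfl, rfl⟩ := this
    have hxP : a ∈ P := hu.subset (by simp)
    have hz : z ∈ 0 :: Q := hv.subset (by simp)
    rcases List.mem_cons.mp hz with rfl | hz
    · omega
    · exact absurd (hgt a hxP z hz) (by omega)
  | a :: b :: c :: u', v, huv =>
    have : a = x ∧ b = y ∧ c = z ∧ u' ++ v = [] := by
      simpa using huv.symm
    obtain ⟨rfl, rfl, rfl, h⟩ := this
    obtain ⟨hu', -⟩ := List.append_eq_nil_iff.mp h
    subst hu'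
    exact hP ⟨a, b, c, hyx, hxz, hu⟩

lemma split_zero : ∀ (X₁ : List ℕ) {X₂ Y₁ Y₂ : List ℕ}, 0 ∉ X₁ → 0 ∉ X₂ →
    X₁ ++ 0 :: Y₁ = X₂ ++ 0 :: Y₂ → X₁ = X₂ ∧ Y₁ = Y₂ := by
  intro X₁
  induction X₁ with
  | nil =>
    intro X₂ Y₁ Y₂ _ h2 h
    cases X₂ with
    | nil => simpa using h
    | cons b t =>
      simp only [List.nil_append, List.cons_append, List.cons.injEq] at h
      exact absurd (h.1 ▸ List.mem_cons_self) (h.1 ▸ h2)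
  | cons a s ih =>
    intro X₂ Y₁ Y₂ h1 h2 h
    cases X₂ with
    | nil =>
      simp only [List.cons_append, List.nil_append, List.cons.injEq] at h
      exact absurd (h.1 ▸ List.mem_cons_self) (h.1 ▸ h1)
    | cons b t =>
      simp only [List.cons_append, List.cons.injEq] at h
      obtain ⟨rfl, h⟩ := h
      obtain ⟨rfl, rfl⟩ := ih (fun hx => h1 (List.mem_cons_of_mem _ hx))
        (fun hx => h2 (List.mem_cons_of_mem _ hx)) h
      exact ⟨rfl, rfl⟩

lemma toFinset_range' (n : ℕ) : (List.range n).toFinset = Finset.range n := by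
  ext x; simp

/-- The gluing map for the Catalan recursion. -/
def glue (n : ℕ) (x : (i : ℕ) × (List ℕ × List ℕ)) : List ℕ :=
  x.2.1.map (· + (n + 1 - x.1)) ++ 0 :: x.2.2.map (· + 1)

lemma card_avL (n : ℕ) : (avL n).card = catalan n := by
  induction n using Nat.strong_induction_on with
  | _ n ih =>
    match n with
    | 0 =>
      have : avL 0 = {[]} := by
        ext l
        rw [mem_avL]
        simp only [List.range_zero, List.perm_nil, Finset.mem_singleton]
        constructor
        · rintro ⟨rfl, _⟩; rfl
        · rintro rfl
          refine ⟨rfl, ?_⟩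
          rintro ⟨x, y, z, _, _, hs⟩
          simp at hs
      rw [this]; simp
    | n + 1 =>
      have key : ((Finset.range (n + 1)).sigma
          (fun i => (avL i) ×ˢ (avL (n - i)))).card = (avL (n + 1)).card := by
        apply Finset.card_bij (fun x _ => glue n x)
        · -- maps into avL (n+1)
          rintro ⟨i, A, B⟩ hx
          simp only [Finset.mem_sigma, Finset.mem_range, Finset.mem_product] at hx
          obtain ⟨hi, hA, hB⟩ := hx
          rw [mem_avL] at hA hB ⊢
          have hglue : glue n ⟨i, (A, B)⟩
              = A.map (· + (n + 1 - i)) ++ 0 :: B.map (· + 1) := rfl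
          rw [hglue]
          obtain ⟨hAp, hAc⟩ := hA
          obtain ⟨hBp, hBc⟩ := hB
          have hi' : i ≤ n := by omega
          set c := n + 1 - i with hc
          have hcpos : 1 ≤ c := by omega
          have hmemA : ∀ x ∈ A, x < i := fun x hx => by
            simpa using hAp.subset hx
          have hmemB : ∀ x ∈ B, x < n - i := fun x hx => by
            simpa using hBp.subset hx
          constructor
          · -- permutation of range (n+1)
            apply List.perm_of_nodup_nodup_toFinset_eq
            · rw [List.nodup_append]
              refine ⟨(hAp.nodup_iff.mpr (List.nodup_range)).map
                (fun a b => by omega), ?_, ?_⟩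
              · rw [List.nodup_cons]
                refine ⟨?_, (hBp.nodup_iff.mpr (List.nodup_range)).map
                  (fun a b => by omega)⟩
                simp only [List.mem_map]
                rintro ⟨x, hx, h⟩
                omega
              · intro a ha b hb
                simp only [List.mem_map] at ha
                obtain ⟨a', ha', rfl⟩ := ha
                rcases List.mem_cons.mp hb with h0 | hb
                · omega
                · simp only [List.mem_map] at hb
                  obtain ⟨b', hb', heq⟩ := hb
                  have := hmemB b' hb'
                  omega
            · exact List.nodup_range
            · rw [toFinset_range']
              ext x
              simp only [List.toFinset_append, List.toFinset_cons, Finset.mem_union,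
                Finset.mem_insert, List.mem_toFinset, List.mem_map, Finset.mem_range]
              constructor
              · rintro (⟨a, ha, rfl⟩ | rfl | ⟨b, hb, rfl⟩)
                · have := hmemA a ha; omega
                · omega
                · have := hmemB b hb; omega
              · intro hx
                by_cases h0 : x = 0
                · exact Or.inr (Or.inl h0)
                · by_cases hbig : c ≤ x
                  · refine Or.inl ⟨x - c, ?_, by omega⟩
                    have : x - c < i := by omega
                    simpa [hAp.mem_iff] using this
                  · refine Or.inr (Or.inr ⟨x - 1, ?_, by omega⟩)
                    have : x - 1 < n - i := by omega
                    simpa [hBp.mem_iff] using this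
          · -- avoids 213
            apply not_CL_glue
            · exact fun h => hAc ((CL_map_add c A).mp h)
            · exact fun h => hBc ((CL_map_add 1 B).mp h)
            · intro a ha b hb
              simp only [List.mem_map] at ha hb
              obtain ⟨a', ha', rfl⟩ := ha
              obtain ⟨b', hb', rfl⟩ := hb
              have := hmemB b' hb'
              omega
            · intro a ha
              simp only [List.mem_map] at ha
              obtain ⟨a', _, rfl⟩ := ha
              omega
        · -- injective
          rintro ⟨i, A, B⟩ hx ⟨j, C, D⟩ hy h
          simp only [Finset.mem_sigma, Finset.mem_range, Finset.mem_product, mem_avL] at hx hy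
          obtain ⟨hi, ⟨hAp, _⟩, ⟨hBp, _⟩⟩ := hx
          obtain ⟨hj, ⟨hCp, _⟩, ⟨hDp, _⟩⟩ := hy
          have hg1 : glue n ⟨i, (A, B)⟩
              = A.map (· + (n + 1 - i)) ++ 0 :: B.map (· + 1) := rfl
          have hg2 : glue n ⟨j, (C, D)⟩
              = C.map (· + (n + 1 - j)) ++ 0 :: D.map (· + 1) := rfl
          rw [hg1, hg2] at h
          have hlenA : A.length = i := by simpa using hAp.length_eq
          have hlenC : C.length = j := by simpa using hCp.length_eq
          have h0A : (0 : ℕ) ∉ A.map (· + (n + 1 - i)) := by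
            simp only [List.mem_map, not_exists]; intro x hx; omega
          have h0C : (0 : ℕ) ∉ C.map (· + (n + 1 - j)) := by
            simp only [List.mem_map, not_exists]; intro x hx; omega
          obtain ⟨h1, h2⟩ := split_zero _ h0A h0C h
          have hij : i = j := by
            have := congrArg List.length h1
            simpa [hlenA, hlenC] using this
          subst hij
          have hAC : A = C :=
            List.map_injective_iff.mpr (fun a b => by omega) h1
          have hBD : B = D :=
            List.map_injective_iff.mpr (fun a b => by omega) h2
          subst hAC; subst hBD; rfl
        · -- surjective
          intro l hl
          rw [mem_avL] at hl
          obtain ⟨hlp, hlc⟩ := hl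
          have h0 : (0 : ℕ) ∈ l := hlp.mem_iff.mpr (by simp)
          obtain ⟨X, Y, rfl⟩ := List.append_of_mem h0
          have hnd : (X ++ 0 :: Y).Nodup := hlp.nodup_iff.mpr (List.nodup_range)
          rw [List.nodup_append] at hnd
          obtain ⟨hndX, hnd0Y, hdisj⟩ := hnd
          have h0Y : (0 : ℕ) ∉ Y := (List.nodup_cons.mp hnd0Y).1
          have hndY : Y.Nodup := (List.nodup_cons.mp hnd0Y).2
          have h0X : (0 : ℕ) ∉ X := fun hx => hdisj _ hx _ List.mem_cons_self rfl
          set i := X.length with hidef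
          have hlen : X.length + Y.length + 1 = n + 1 := by
            have := hlp.length_eq
            simp at this
            omega
          have hi : i ≤ n := by omega
          have hYlen : Y.length = n - i := by omega
          have hmem : ∀ x ∈ X ++ 0 :: Y, x < n + 1 := fun x hx => by
            simpa using hlp.subset hx
          have hgt : ∀ a ∈ X, ∀ b ∈ Y, b < a := by
            intro a ha b hb
            by_contra hcon
            push_neg at hcon
            have hab : a ≠ b := hdisj a ha b (List.mem_cons_of_mem _ hb)
            have ha0 : a ≠ 0 := fun h => h0X (h ▸ ha)
            have : a < b := by omega
            apply hlc
            refine ⟨a, 0, b, by omega, this, ?_⟩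
            exact ((List.singleton_sublist.mpr ha).append
              ((List.singleton_sublist.mpr hb).cons₂ 0))
          set c := n + 1 - i with hcdef
          -- each element of X is at least c
          have hXlb : ∀ a ∈ X, c ≤ a ∧ a ≤ n := by
            intro a ha
            have haU : a < n + 1 := hmem a (List.mem_append.mpr (Or.inl ha))
            have ha0 : a ≠ 0 := fun h => h0X (h ▸ ha)
            have hsub : Y.toFinset ⊆ Finset.Ioo 0 a := by
              intro b hb
              rw [List.mem_toFinset] at hb
              have hb0 : b ≠ 0 := fun h => h0Y (h ▸ hb)
              have := hgt a ha b hb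
              simp only [Finset.mem_Ioo]
              omega
            have hcard := Finset.card_le_card hsub
            rw [List.toFinset_card_of_nodup hndY, hYlen] at hcard
            simp only [Nat.card_Ioo] at hcard
            omega
          have hXF : X.toFinset = Finset.Icc c n := by
            apply Finset.eq_of_subset_of_card_le
            · intro a ha
              rw [List.mem_toFinset] at ha
              simpa [Finset.mem_Icc] using hXlb a ha
            · rw [List.toFinset_card_of_nodup hndX]
              simp only [Nat.card_Icc]
              omega
          have hYub : ∀ b ∈ Y, 1 ≤ b ∧ b ≤ n - i := by
            intro b hb
            have hb0 : b ≠ 0 := fun h => h0Y (h ▸ hb)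
            constructor
            · omega
            · by_cases hi0 : i = 0
              · have : b < n + 1 := hmem b
                  (List.mem_append.mpr (Or.inr (List.mem_cons_of_mem _ hb)))
                omega
              · have hcX : c ∈ X.toFinset := by
                  rw [hXF]; simp [Finset.mem_Icc]; omega
                rw [List.mem_toFinset] at hcX
                have := hgt c hcX b hb
                omega
          have hYF : Y.toFinset = Finset.Icc 1 (n - i) := by
            apply Finset.eq_of_subset_of_card_le
            · intro b hb
              rw [List.mem_toFinset] at hb
              simpa [Finset.mem_Icc] using hYub b hb
            · rw [List.toFinset_card_of_nodup hndY]
              simp only [Nat.card_Icc]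
              omega
          -- the two pieces
          refine ⟨⟨i, X.map (· - c), Y.map (· - 1)⟩, ?_, ?_⟩
          · simp only [Finset.mem_sigma, Finset.mem_range, Finset.mem_product, mem_avL]
            have hXeq : (X.map (· - c)).map (· + c) = X := by
              rw [List.map_map]
              conv_rhs => rw [← List.map_id X]
              apply List.map_congr_left
              intro a ha
              have := (hXlb a ha).1
              simp; omega
            have hYeq : (Y.map (· - 1)).map (· + 1) = Y := by
              rw [List.map_map]
              conv_rhs => rw [← List.map_id Y]
              apply List.map_congr_left
              intro b hb
              have := (hYub b hb).1
              simp; omega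
            refine ⟨by omega, ⟨?_, ?_⟩, ?_, ?_⟩
            · -- X.map (· - c) ~ range i
              apply List.perm_of_nodup_nodup_toFinset_eq
              · exact List.Nodup.of_map _ (hXeq ▸ hndX)
              · exact List.nodup_range
              · rw [toFinset_range']
                ext x
                simp only [List.mem_toFinset, List.mem_map, Finset.mem_range]
                constructor
                · rintro ⟨a, ha, rfl⟩
                  have := hXlb a ha
                  omega
                · intro hx
                  refine ⟨x + c, ?_, by omega⟩
                  have : x + c ∈ X.toFinset := by
                    rw [hXF]; simp [Finset.mem_Icc]; omega
                  rwa [List.mem_toFinset] at this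
            · -- avoids
              intro hC
              apply hlc
              apply CL_of_sublist (List.sublist_append_left X (0 :: Y))
              exact hXeq ▸ (CL_map_add c _).mpr hC
            · -- Y.map (· - 1) ~ range (n - i)
              apply List.perm_of_nodup_nodup_toFinset_eq
              · exact List.Nodup.of_map _ (hYeq ▸ hndY)
              · exact List.nodup_range
              · rw [toFinset_range']
                ext x
                simp only [List.mem_toFinset, List.mem_map, Finset.mem_range]
                constructor
                · rintro ⟨b, hb, rfl⟩
                  have := hYub b hb
                  omega
                · intro hx
                  refine ⟨x + 1, ?_, by omega⟩
                  have : x + 1 ∈ Y.toFinset := by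
                    rw [hYF]; simp [Finset.mem_Icc]; omega
                  rwa [List.mem_toFinset] at this
            · intro hC
              apply hlc
              apply CL_of_sublist ((List.sublist_cons_self 0 Y).trans
                (List.sublist_append_right X (0 :: Y)))
              exact hYeq ▸ (CL_map_add 1 _).mpr hC
          · -- glue gives back l
            show (X.map (· - c)).map (· + (n + 1 - i)) ++ 0 :: (Y.map (· - 1)).map (· + 1)
              = X ++ 0 :: Y
            have hXeq : (X.map (· - c)).map (· + (n + 1 - i)) = X := by
              rw [List.map_map]
              conv_rhs => rw [← List.map_id X]
              apply List.map_congr_left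
              intro a ha
              have := (hXlb a ha).1
              simp; omega
            have hYeq : (Y.map (· - 1)).map (· + 1) = Y := by
              rw [List.map_map]
              conv_rhs => rw [← List.map_id Y]
              apply List.map_congr_left
              intro b hb
              have := (hYub b hb).1
              simp; omega
            rw [hXeq, hYeq]
      rw [← key, Finset.card_sigma]
      rw [catalan_succ, ← Finset.sum_range (fun i => catalan i * catalan (n - i))]
      apply Finset.sum_congr rfl
      intro i hi
      rw [Finset.mem_range] at hi
      rw [Finset.card_product, ih i (by omega), ih (n - i) (by omega)]

/-! ### Transfer to permutations -/

lemma contains_iff_CL {m : ℕ} (σ : Equiv.Perm (Fin m)) :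
    Contains213 σ ↔ CL (List.ofFn fun i => (σ i : ℕ)) := by
  set l := List.ofFn fun i => (σ i : ℕ) with hl
  have hlen : l.length = m := by simp [hl]
  constructor
  · rintro ⟨p, q, r, hpq, hqr, h1, h2⟩
    refine ⟨σ p, σ q, σ r, h1, h2, ?_⟩
    have : [(σ p : ℕ), σ q, σ r] = List.map l.get
        [⟨p, by omega⟩, ⟨q, by omega⟩, ⟨r, by omega⟩] := by
      simp [hl, List.get_ofFn]
    rw [this]
    apply List.map_getElem_sublist
    refine List.Pairwise.cons ?_ (List.Pairwise.cons ?_ (List.pairwise_singleton _ _))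
    · intro j hj
      rcases List.mem_cons.mp hj with rfl | hj
      · exact hpq
      · rcases List.mem_singleton.mp hj with rfl
        exact hpq.trans hqr
    · intro j hj
      rcases List.mem_singleton.mp hj with rfl
      exact hqr
  · rintro ⟨x, y, z, h1, h2, hs⟩
    obtain ⟨is, his, hpw⟩ := List.sublist_eq_map_getElem hs
    match is, his with
    | [a, b, d], his =>
      simp only [List.map_cons, List.map_nil, List.cons.injEq, and_true] at his
      obtain ⟨hx, hy, hz⟩ := his
      have hab : a < b := (List.pairwise_cons.mp hpw).1 b (by simp)
      have hbd : b < d :=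
        (List.pairwise_cons.mp (List.pairwise_cons.mp hpw).2).1 d (by simp)
      have had : a < d := hab.trans hbd
      have hget : ∀ (j : Fin l.length), l[j] = ((σ ⟨j.1, by omega⟩ : Fin m) : ℕ) := by
        intro j
        exact List.get_ofFn _ j
      refine ⟨⟨a.1, by omega⟩, ⟨b.1, by omega⟩, ⟨d.1, by omega⟩,
        ?_, ?_, ?_, ?_⟩
      · exact hab
      · exact hbd
      · rw [Fin.lt_def]
        show ((σ ⟨b.1, _⟩ : Fin m) : ℕ) < ((σ ⟨a.1, _⟩ : Fin m) : ℕ)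
        rw [← hget b, ← hget a, ← hx, ← hy]
        exact h1
      · rw [Fin.lt_def]
        show ((σ ⟨a.1, _⟩ : Fin m) : ℕ) < ((σ ⟨d.1, _⟩ : Fin m) : ℕ)
        rw [← hget a, ← hget d, ← hx, ← hz]
        exact h2

lemma card_Av213_eq_card_avL (n : ℕ) : (Av213 n).card = (avL n).card := by
  classical
  apply Finset.card_bij (fun σ _ => List.ofFn fun i => ((σ : Equiv.Perm (Fin n)) i : ℕ))
  · intro σ hσ
    simp only [Av213, Finset.mem_filter, Finset.mem_univ, true_and] at hσ
    rw [mem_avL]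
    constructor
    · apply List.perm_of_nodup_nodup_toFinset_eq
      · rw [List.nodup_ofFn]
        exact fun a b h => σ.injective (Fin.val_injective h)
      · exact List.nodup_range
      · rw [toFinset_range']
        ext x
        simp only [List.mem_toFinset, List.mem_ofFn, Set.mem_range, Finset.mem_range]
        constructor
        · rintro ⟨i, rfl⟩
          exact (σ i).isLt
        · intro hx
          exact ⟨σ⁻¹ ⟨x, hx⟩, by simp⟩
    · rw [← contains_iff_CL]
      exact hσ
  · intro σ hσ τ hτ h
    have := fun i : Fin n => congrArg (fun l => l[i]?) h
    apply Equiv.ext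
    intro i
    have h2 : ((σ i : ℕ)) = ((τ i : ℕ)) := by
      have := congrArg (fun l => l.getD i 0) h
      simpa [List.getD_eq_getElem, List.getElem_ofFn] using this
    exact Fin.val_injective h2
  · intro l hl
    rw [mem_avL] at hl
    obtain ⟨hlp, hlc⟩ := hl
    have hlen : l.length = n := by simpa using hlp.length_eq
    have hnd : l.Nodup := hlp.nodup_iff.mpr (List.nodup_range)
    have hmem : ∀ x ∈ l, x < n := fun x hx => by simpa using hlp.subset hx
    set f : Fin n → Fin n := fun i =>
      ⟨l.get ⟨i, by omega⟩, hmem _ (l.get_mem _)⟩ with hf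
    have hinj : Function.Injective f := by
      intro a b hab
      have : l.get ⟨a, by omega⟩ = l.get ⟨b, by omega⟩ := by
        simpa [hf, Fin.ext_iff] using hab
      have := (hnd.get_inj_iff).mp this
      simpa [Fin.ext_iff] using this
    have hbij : Function.Bijective f := Finite.injective_iff_bijective.mp hinj
    set σ := Equiv.ofBijective f hbij with hσ
    refine ⟨σ, ?_, ?_⟩
    · simp only [Av213, Finset.mem_filter, Finset.mem_univ, true_and]
      rw [contains_iff_CL]
      intro hC
      apply hlc
      have : (List.ofFn fun i => (σ i : ℕ)) = l := by
        apply List.ext_get (by simp [hlen])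
        intro t h1 h2
        simp [hσ, hf, Equiv.ofBijective, List.get_ofFn]
      rwa [this] at hC
    · apply List.ext_get (by simp [hlen])
      intro t h1 h2
      simp [hσ, hf, Equiv.ofBijective, List.get_ofFn]

/-- The number of 213-avoiding permutations of `[n]` is the `n`th Catalan
number `(1/(n+1))·C(2n,n)`. -/
theorem card_Av213_eq_catalan (n : ℕ) :
    (Av213 n).card = Nat.choose (2 * n) n / (n + 1) := by
  rw [card_Av213_eq_card_avL, card_avL, catalan_eq_centralBinom_div]
  rfl
end

section
/- Let π ∈ Av_n(213) decompose as π = (α + j + 1) 1 (β + 1) where α ∈ Av_i(213), β ∈ Av_j(213), i + j = n − 1, α + j + 1 means adding j+1 to each entry of α, and β + 1 means adding 1 to each entry of β. Then H(π) = H(α) + H(β) + 𝟙{i≥2}(i−1)(j+1) + 𝟙{j≥2}(j−1) + 𝟙{i≥1} + 𝟙{j≥1}, where H(σ) = Σ_{t=1}^{|σ|−1} min{σ(t), σ(t+1)}. -/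
/-- `π` is a 213-avoiding permutation of `[n]` (in the `ℕ → ℕ` model). -/
def Avoids213On (n : ℕ) (π : ℕ → ℕ) : Prop :=
  IsPermOn n π ∧
    ¬ ∃ p q r, 1 ≤ p ∧ p < q ∧ q < r ∧ r ≤ n ∧ π q < π p ∧ π p < π r


private lemma sum_Ioc_shift (a m : ℕ) (f : ℕ → ℕ) :
    ∑ t ∈ Finset.Ioc a (a + m), f t = ∑ s ∈ Finset.Ioc 0 m, f (a + s) := by
  induction m with
  | zero => simp
  | succ m ih =>
      rw [show a + (m + 1) = (a + m) + 1 from rfl,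
        Finset.sum_Ioc_succ_top (Nat.le_add_right a m),
        Finset.sum_Ioc_succ_top (Nat.zero_le m), ih]
      rfl

/-- Gluing identity for the horizontal statistic `H` under the Catalan
decomposition `π = (α + j + 1) 1 (β + 1)`. -/
theorem Hstat_glue (i j : ℕ) (α β : ℕ → ℕ)
    (hα : Avoids213On i α) (hβ : Avoids213On j β) :
    Hstat (i + j + 1)
        (fun t => if t ≤ i then α t + (j + 1)
                  else if t = i + 1 then 1
                  else β (t - (i + 1)) + 1) =
      Hstat i α + Hstat j β +
        (if 2 ≤ i then (i - 1) * (j + 1) else 0) +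
        (if 2 ≤ j then j - 1 else 0) +
        (if 1 ≤ i then 1 else 0) + (if 1 ≤ j then 1 else 0) := by
  classical
  set f : ℕ → ℕ := fun t => if t ≤ i then α t + (j + 1)
                  else if t = i + 1 then 1
                  else β (t - (i + 1)) + 1 with hf
  have key : ∀ t, 1 ≤ t → min (f t) (f (t + 1)) =
      if t + 1 ≤ i then min (α t) (α (t + 1)) + (j + 1)
      else if t = i ∧ 1 ≤ i then 1
      else if t = i + 1 then 1
      else min (β (t - (i + 1))) (β (t + 1 - (i + 1))) + 1 := by
    intro t ht
    simp only [hf]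
    split_ifs <;> omega
  have hIcc : ∀ m : ℕ, Finset.Icc 1 m = Finset.Ioc 0 m := fun m =>
    Finset.Icc_add_one_left_eq_Ioc 0 m
  unfold Hstat
  rw [show i + j + 1 - 1 = i + j from rfl, hIcc, hIcc, hIcc]
  rw [← Finset.sum_Ioc_consecutive _ (Nat.zero_le i) (Nat.le_add_right i j)]
  have leftsum : ∑ t ∈ Finset.Ioc 0 i, min (f t) (f (t + 1)) =
      (∑ t ∈ Finset.Ioc 0 (i - 1), min (α t) (α (t + 1))) +
        (i - 1) * (j + 1) + (if 1 ≤ i then 1 else 0) := by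
    rcases Nat.eq_zero_or_pos i with hi | hi
    · subst hi; simp
    · obtain ⟨i', rfl⟩ : ∃ i', i = i' + 1 := ⟨i - 1, by omega⟩
      rw [Finset.sum_Ioc_succ_top (Nat.zero_le i')]
      have h2 : min (f (i' + 1)) (f (i' + 1 + 1)) = 1 := by
        rw [key _ (by omega)]
        have c1 : ¬ (i' + 1 + 1 ≤ i' + 1) := by omega
        have c2 : i' + 1 = i' + 1 ∧ 1 ≤ i' + 1 := ⟨rfl, by omega⟩
        rw [if_neg c1, if_pos c2]
      rw [h2]
      have h3 : ∀ t ∈ Finset.Ioc 0 i', min (f t) (f (t + 1)) =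
          min (α t) (α (t + 1)) + (j + 1) := by
        intro t ht
        simp only [Finset.mem_Ioc] at ht
        rw [key _ (by omega), if_pos (by omega : t + 1 ≤ i' + 1)]
      rw [Finset.sum_congr rfl h3, Finset.sum_add_distrib,
        Finset.sum_const, Nat.card_Ioc]
      rw [if_pos (by omega : 1 ≤ i' + 1)]
      simp only [Nat.add_sub_cancel, Nat.sub_zero, smul_eq_mul, mul_one]
  have rightsum : ∑ t ∈ Finset.Ioc i (i + j), min (f t) (f (t + 1)) =
      (∑ t ∈ Finset.Ioc 0 (j - 1), min (β t) (β (t + 1))) +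
        (j - 1) + (if 1 ≤ j then 1 else 0) := by
    rcases Nat.eq_zero_or_pos j with hj | hj
    · subst hj; simp
    · obtain ⟨j', rfl⟩ : ∃ j', j = j' + 1 := ⟨j - 1, by omega⟩
      rw [← Finset.sum_Ioc_consecutive _ (by omega : i ≤ i + 1)
        (by omega : i + 1 ≤ i + (j' + 1))]
      have hsingle : Finset.Ioc i (i + 1) = {i + 1} := by
        ext x; simp [Finset.mem_Ioc]
      rw [hsingle, Finset.sum_singleton]
      have h1 : min (f (i + 1)) (f (i + 1 + 1)) = 1 := by
        rw [key _ (by omega)]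
        have c1 : ¬ (i + 1 + 1 ≤ i) := by omega
        have c2 : ¬ (i + 1 = i ∧ 1 ≤ i) := by omega
        rw [if_neg c1, if_neg c2, if_pos rfl]
      rw [h1]
      have hsh : i + (j' + 1) = (i + 1) + j' := by omega
      rw [hsh, sum_Ioc_shift]
      have h3 : ∀ s ∈ Finset.Ioc 0 j', min (f (i + 1 + s)) (f (i + 1 + s + 1)) =
          min (β s) (β (s + 1)) + 1 := by
        intro s hs
        simp only [Finset.mem_Ioc] at hs
        rw [key _ (by omega)]
        have c1 : ¬ (i + 1 + s + 1 ≤ i) := by omega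
        have c2 : ¬ (i + 1 + s = i ∧ 1 ≤ i) := by omega
        have c3 : ¬ (i + 1 + s = i + 1) := by omega
        rw [if_neg c1, if_neg c2, if_neg c3]
        have e1 : i + 1 + s - (i + 1) = s := by omega
        have e2 : i + 1 + s + 1 - (i + 1) = s + 1 := by omega
        rw [e1, e2]
      rw [Finset.sum_congr rfl h3, Finset.sum_add_distrib,
        Finset.sum_const, Nat.card_Ioc]
      rw [if_pos (by omega : 1 ≤ j' + 1)]
      simp only [Nat.add_sub_cancel, Nat.sub_zero, smul_eq_mul, mul_one]
      omega
  rw [leftsum, rightsum]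
  have e1 : (if 2 ≤ i then (i - 1) * (j + 1) else 0) = (i - 1) * (j + 1) := by
    split_ifs with h
    · rfl
    · have hz : i - 1 = 0 := by omega
      rw [hz, Nat.zero_mul]
  have e2 : (if 2 ≤ j then j - 1 else 0) = j - 1 := by
    split_ifs with h
    · rfl
    · omega
  rw [e1, e2]
  ring
end
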